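/- For the Gaussian kernel k_σ on ℝ^d with σ > 0 and probability measures P, Q on ℝ^d with characteristic functions φ_P, φ_Q, the squared MMD satisfies γ²_{k_σ}(P,Q) = (σ/√(2π))^d · ∫_{ℝ^d} |φ_P(w) − φ_Q(w)|² · exp(−σ²·wᵀw/2) dw. -/

import Mathlib

open MeasureTheory Real

/-- The Gaussian kernel on `ℝ^d` with bandwidth `σ`. -/
noncomputable def gaussKer (d : ℕ) (σ : ℝ) (x y : Fin d → ℝ) : ℝ :=
  Real.exp (-(∑ i, (x i - y i) ^ 2) / (2 * σ ^ 2))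

/-- The squared maximum mean discrepancy between `P` and `Q` for the kernel `k`. -/
noncomputable def gammaSq (d : ℕ) (k : (Fin d → ℝ) → (Fin d → ℝ) → ℝ)
    (P Q : Measure (Fin d → ℝ)) : ℝ :=
  (∫ x, ∫ y, k x y ∂P ∂P) + (∫ x, ∫ y, k x y ∂Q ∂Q) - 2 * ∫ x, ∫ y, k x y ∂P ∂Q

/-- The characteristic function of a measure `P` on `ℝ^d`. -/
noncomputable def charFn (d : ℕ) (P : Measure (Fin d → ℝ)) (w : Fin d → ℝ) : ℂ :=
  ∫ x, Complex.exp (Complex.I * ((∑ i, w i * x i : ℝ) : ℂ)) ∂P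

noncomputable def eker (d : ℕ) (x w : Fin d → ℝ) : ℂ :=
  Complex.exp (Complex.I * ((∑ i, w i * x i : ℝ) : ℂ))

noncomputable def gw (d : ℕ) (σ : ℝ) (w : Fin d → ℝ) : ℝ :=
  Real.exp (-σ ^ 2 * (∑ i, w i ^ 2) / 2)

lemma oneDim {σ : ℝ} (hσ : 0 < σ) (t : ℝ) :
    ∫ v : ℝ, Complex.exp (Complex.I * t * v) * Complex.exp (-((σ:ℂ)^2/2) * v^2) =
      ((Real.sqrt (2*Real.pi)/σ * Real.exp (-t^2/(2*σ^2)) : ℝ) : ℂ) := by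
  have hb : (0:ℝ) < σ^2/2 := by positivity
  have h := fourierIntegral_gaussian (b := ((σ^2/2 : ℝ) : ℂ))
    (by simp only [Complex.ofReal_re]; exact hb) (t : ℂ)
  rw [show (((σ^2/2 : ℝ)) : ℂ) = ((σ:ℂ)^2/2) by push_cast; ring] at h
  rw [h]
  have h2 : ((Real.pi : ℂ) / ((σ:ℂ)^2/2)) ^ (1/2 : ℂ)
      = ((Real.sqrt (2*Real.pi) / σ : ℝ) : ℂ) := by
    have e1 : ((Real.pi / (σ^2/2) : ℝ) : ℂ) = (Real.pi : ℂ) / ((σ:ℂ)^2/2) := by push_cast; ring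
    rw [← e1, show (1/2 : ℂ) = ((1/2 : ℝ) : ℂ) by norm_num,
      ← Complex.ofReal_cpow (by positivity) (1/2 : ℝ)]
    congr 1
    rw [← Real.sqrt_eq_rpow, show Real.pi / (σ^2/2) = 2*Real.pi / σ^2 by ring,
      Real.sqrt_div (by positivity) (σ^2), Real.sqrt_sq hσ.le]
  have h3 : Complex.exp (-(t:ℂ)^2 / (4 * ((σ:ℂ)^2/2)))
      = ((Real.exp (-t^2/(2*σ^2)) : ℝ) : ℂ) := by
    rw [Complex.ofReal_exp]
    congr 1
    push_cast; ring
  rw [h2, h3, ← Complex.ofReal_mul]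

lemma prodLemma (d : ℕ) {σ : ℝ} (hσ : 0 < σ) (x y : Fin d → ℝ) :
    ∫ w : Fin d → ℝ, eker d x w * (starRingEnd ℂ) (eker d y w) * (gw d σ w : ℂ) =
      (((Real.sqrt (2*Real.pi)/σ)^d * gaussKer d σ x y : ℝ) : ℂ) := by
  have hpt : ∀ w : Fin d → ℝ, eker d x w * (starRingEnd ℂ) (eker d y w) * (gw d σ w : ℂ)
      = ∏ i, (fun v : ℝ => Complex.exp (Complex.I * ((x i - y i : ℝ):ℂ) * (v:ℂ))
          * Complex.exp (-((σ:ℂ)^2/2) * (v:ℂ)^2)) (w i) := by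
    intro w
    simp only
    rw [Finset.prod_mul_distrib, ← Complex.exp_sum, ← Complex.exp_sum, ← Complex.exp_add]
    unfold eker gw
    rw [← Complex.exp_conj, ← Complex.exp_add, Complex.ofReal_exp, ← Complex.exp_add]
    congr 1
    rw [map_mul, Complex.conj_I, Complex.conj_ofReal]
    push_cast
    simp only [Finset.mul_sum, Finset.sum_div, neg_mul, ← Finset.sum_neg_distrib,
      ← Finset.sum_add_distrib]
    exact Finset.sum_congr rfl (fun i _ => by push_cast; ring)
  calc ∫ w : Fin d → ℝ, eker d x w * (starRingEnd ℂ) (eker d y w) * (gw d σ w : ℂ)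
      = ∫ w : Fin d → ℝ, ∏ i, (fun v : ℝ => Complex.exp (Complex.I * ((x i - y i : ℝ):ℂ) * (v:ℂ))
          * Complex.exp (-((σ:ℂ)^2/2) * (v:ℂ)^2)) (w i) := by simp_rw [hpt]
    _ = ∏ i, ∫ v : ℝ, Complex.exp (Complex.I * ((x i - y i : ℝ):ℂ) * (v:ℂ))
          * Complex.exp (-((σ:ℂ)^2/2) * (v:ℂ)^2) :=
        MeasureTheory.integral_fintype_prod_eq_prod
          (fun i (v:ℝ) => Complex.exp (Complex.I * ((x i - y i : ℝ):ℂ) * (v:ℂ))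
          * Complex.exp (-((σ:ℂ)^2/2) * (v:ℂ)^2))
    _ = ∏ i, ((Real.sqrt (2*Real.pi)/σ * Real.exp (-(x i - y i)^2/(2*σ^2)) : ℝ) : ℂ) := by
        simp_rw [oneDim hσ]
    _ = (((Real.sqrt (2*Real.pi)/σ)^d * gaussKer d σ x y : ℝ) : ℂ) := by
        rw [← Complex.ofReal_prod]
        congr 1
        rw [Finset.prod_mul_distrib, Finset.prod_const, Finset.card_univ, Fintype.card_fin,
          ← Real.exp_sum]
        unfold gaussKer
        rw [← Finset.sum_neg_distrib, ← Finset.sum_div]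

lemma charFn_eq (d : ℕ) (P : Measure (Fin d → ℝ)) (w : Fin d → ℝ) :
    charFn d P w = ∫ x, eker d x w ∂P := rfl

lemma gw_cont (d : ℕ) (σ : ℝ) : Continuous (gw d σ) := by
  unfold gw
  fun_prop

lemma gw_nonneg (d : ℕ) (σ : ℝ) (w : Fin d → ℝ) : 0 ≤ gw d σ w := Real.exp_nonneg _

lemma eker_cont (d : ℕ) : Continuous (fun p : (Fin d → ℝ) × (Fin d → ℝ) => eker d p.1 p.2) := by
  unfold eker
  fun_prop

lemma norm_eker (d : ℕ) (x w : Fin d → ℝ) : ‖eker d x w‖ = 1 := by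
  unfold eker
  rw [Complex.norm_exp]
  simp [Complex.mul_re]

lemma integrable_gw (d : ℕ) {σ : ℝ} (hσ : 0 < σ) : Integrable (gw d σ) := by
  have h : ∀ w : Fin d → ℝ, gw d σ w = ∏ i, (fun v : ℝ => Real.exp (-(σ^2/2) * v^2)) (w i) := by
    intro w
    simp only [gw, ← Real.exp_sum]
    congr 1
    rw [Finset.mul_sum, Finset.sum_div]
    exact Finset.sum_congr rfl fun i _ => by ring
  rw [funext h]
  exact MeasureTheory.Integrable.fintype_prod (fun i => integrable_exp_neg_mul_sq (by positivity))

lemma sm_charFn (d : ℕ) (P : Measure (Fin d → ℝ)) [SigmaFinite P] :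
    StronglyMeasurable (charFn d P) := by
  have : Continuous (fun p : (Fin d → ℝ) × (Fin d → ℝ) =>
      Complex.exp (Complex.I * ((∑ i, p.1 i * p.2 i : ℝ) : ℂ))) := by fun_prop
  exact this.stronglyMeasurable.integral_prod_right'

lemma norm_charFn_le (d : ℕ) (P : Measure (Fin d → ℝ)) [IsProbabilityMeasure P] (w : Fin d → ℝ) :
    ‖charFn d P w‖ ≤ 1 := by
  rw [charFn_eq]
  calc ‖∫ x, eker d x w ∂P‖ ≤ ∫ x, ‖eker d x w‖ ∂P := norm_integral_le_integral_norm _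
    _ = 1 := by simp only [norm_eker]; simp

lemma integral_cofReal {α : Type*} [MeasurableSpace α] {μ : Measure α} {f : α → ℝ} :
    ∫ x, ((f x : ℝ) : ℂ) ∂μ = ((∫ x, f x ∂μ : ℝ) : ℂ) := integral_ofReal

lemma integrable_gw_snd (d : ℕ) {σ : ℝ} (hσ : 0 < σ) (μ : Measure (Fin d → ℝ))
    [IsProbabilityMeasure μ] :
    Integrable (fun p : (Fin d → ℝ) × (Fin d → ℝ) => gw d σ p.2) (μ.prod volume) := by
  have := (integrable_const (1:ℝ) (μ := μ)).mul_prod (integrable_gw d hσ)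
  simpa using this

lemma doubleInt (d : ℕ) {σ : ℝ} (hσ : 0 < σ) (μ ν : Measure (Fin d → ℝ))
    [IsProbabilityMeasure μ] [IsProbabilityMeasure ν] :
    ((((Real.sqrt (2*Real.pi)/σ)^d : ℝ)) : ℂ) * ((∫ x, ∫ y, gaussKer d σ x y ∂ν ∂μ : ℝ) : ℂ)
      = ∫ w, charFn d μ w * (starRingEnd ℂ) (charFn d ν w) * (gw d σ w : ℂ) := by
  set c : ℝ := (Real.sqrt (2*Real.pi)/σ)^d with hc
  have e1 : ∫ x, ∫ y, ((c * gaussKer d σ x y : ℝ) : ℂ) ∂ν ∂μ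
      = ((c : ℝ) : ℂ) * ((∫ x, ∫ y, gaussKer d σ x y ∂ν ∂μ : ℝ) : ℂ) := by
    simp_rw [integral_cofReal, integral_const_mul]
    rw [Complex.ofReal_mul]
  rw [← e1]
  -- replace inner with w-integral
  have e2 : ∀ x y, ((c * gaussKer d σ x y : ℝ) : ℂ)
      = ∫ w : Fin d → ℝ, eker d x w * (starRingEnd ℂ) (eker d y w) * (gw d σ w : ℂ) :=
    fun x y => (prodLemma d hσ x y).symm
  simp_rw [e2]
  -- step A: swap y and w
  have hcont1 : ∀ x : Fin d → ℝ, Continuous (fun p : (Fin d → ℝ) × (Fin d → ℝ) =>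
      eker d x p.2 * (starRingEnd ℂ) (eker d p.1 p.2) * ((gw d σ p.2 : ℝ) : ℂ)) := by
    intro x
    unfold eker gw
    apply Continuous.mul
    apply Continuous.mul
    · fun_prop
    · apply Complex.continuous_conj.comp; fun_prop
    · fun_prop
  have hint1 : ∀ x : Fin d → ℝ, Integrable (Function.uncurry fun y w =>
      eker d x w * (starRingEnd ℂ) (eker d y w) * ((gw d σ w : ℝ) : ℂ)) (ν.prod volume) := by
    intro x
    apply Integrable.mono' ((integrable_gw_snd d hσ ν))
    · exact (hcont1 x).aestronglyMeasurable
    · filter_upwards with p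
      simp only [Function.uncurry]
      rw [norm_mul, norm_mul, norm_eker, RCLike.norm_conj, norm_eker, Complex.norm_real]
      rw [Real.norm_eq_abs, abs_of_nonneg (gw_nonneg d σ p.2)]
      simp
  have stepA : ∀ x : Fin d → ℝ, (∫ y, ∫ w : Fin d → ℝ,
      eker d x w * (starRingEnd ℂ) (eker d y w) * ((gw d σ w : ℝ) : ℂ) ∂volume ∂ν)
      = ∫ w : Fin d → ℝ, eker d x w * ((gw d σ w : ℝ) : ℂ) * (starRingEnd ℂ) (charFn d ν w) := by
    intro x
    rw [integral_integral_swap (hint1 x)]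
    congr 1
    funext w
    calc ∫ y, eker d x w * (starRingEnd ℂ) (eker d y w) * ((gw d σ w : ℝ) : ℂ) ∂ν
        = ∫ y, (eker d x w * ((gw d σ w : ℝ) : ℂ)) * (starRingEnd ℂ) (eker d y w) ∂ν := by
          congr 1; funext y; ring
      _ = (eker d x w * ((gw d σ w : ℝ) : ℂ)) * ∫ y, (starRingEnd ℂ) (eker d y w) ∂ν := by
          rw [MeasureTheory.integral_const_mul]
      _ = eker d x w * ((gw d σ w : ℝ) : ℂ) * (starRingEnd ℂ) (charFn d ν w) := by
          rw [integral_conj, charFn_eq]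

  simp_rw [stepA]
  -- step B: swap x and w
  have hint2 : Integrable (Function.uncurry fun x w =>
      eker d x w * ((gw d σ w : ℝ) : ℂ) * (starRingEnd ℂ) (charFn d ν w)) (μ.prod volume) := by
    apply Integrable.mono' ((integrable_gw_snd d hσ μ))
    · apply AEStronglyMeasurable.mul
      · have : Continuous (fun p : (Fin d → ℝ) × (Fin d → ℝ) =>
            eker d p.1 p.2 * ((gw d σ p.2 : ℝ) : ℂ)) := by unfold eker gw; fun_prop
        exact this.aestronglyMeasurable
      · exact (((Complex.continuous_conj.comp_stronglyMeasurable (sm_charFn d ν)).comp_measurable measurable_snd).aestronglyMeasurable)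
    · filter_upwards with p
      simp only [Function.uncurry]
      rw [norm_mul, norm_mul, norm_eker, Complex.norm_real, one_mul, RCLike.norm_conj]
      rw [Real.norm_eq_abs, abs_of_nonneg (gw_nonneg d σ p.2)]
      calc gw d σ p.2 * ‖charFn d ν p.2‖ ≤ gw d σ p.2 * 1 :=
            mul_le_mul_of_nonneg_left (norm_charFn_le d ν p.2) (gw_nonneg d σ p.2)
        _ = gw d σ p.2 := mul_one _
  rw [integral_integral_swap hint2]
  congr 1
  funext w
  calc ∫ x, eker d x w * ((gw d σ w : ℝ) : ℂ) * (starRingEnd ℂ) (charFn d ν w) ∂μ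
      = ∫ x, (((gw d σ w : ℝ) : ℂ) * (starRingEnd ℂ) (charFn d ν w)) * eker d x w ∂μ := by
        congr 1; funext x; ring
    _ = (((gw d σ w : ℝ) : ℂ) * (starRingEnd ℂ) (charFn d ν w)) * ∫ x, eker d x w ∂μ := by
        rw [MeasureTheory.integral_const_mul]
    _ = charFn d μ w * (starRingEnd ℂ) (charFn d ν w) * ((gw d σ w : ℝ) : ℂ) := by
        rw [charFn_eq d μ, charFn_eq d ν]; ring

lemma int_mul_gw (d : ℕ) {σ : ℝ} (hσ : 0 < σ) {f : (Fin d → ℝ) → ℂ}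
    (hf : AEStronglyMeasurable f volume) {C : ℝ} (hbd : ∀ w, ‖f w‖ ≤ C) :
    Integrable (fun w => f w * ((gw d σ w : ℝ) : ℂ)) := by
  apply Integrable.mono' ((integrable_gw d hσ).const_mul C)
  · exact hf.mul ((Complex.continuous_ofReal.comp (gw_cont d σ)).aestronglyMeasurable)
  · filter_upwards with w
    rw [norm_mul, Complex.norm_real, Real.norm_eq_abs, abs_of_nonneg (gw_nonneg d σ w)]
    exact mul_le_mul_of_nonneg_right (hbd w) (gw_nonneg d σ w)

theorem stmt_5 (d : ℕ) (σ : ℝ) (hσ : 0 < σ)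
    (P Q : Measure (Fin d → ℝ)) [IsProbabilityMeasure P] [IsProbabilityMeasure Q] :
    gammaSq d (gaussKer d σ) P Q =
      (σ / Real.sqrt (2 * Real.pi)) ^ d *
        ∫ w : Fin d → ℝ,
          ‖charFn d P w - charFn d Q w‖ ^ 2 *
            Real.exp (-σ ^ 2 * (∑ i, w i ^ 2) / 2) := by
  set c : ℝ := (Real.sqrt (2*Real.pi)/σ)^d with hc
  have hcpos : 0 < c := pow_pos (div_pos (Real.sqrt_pos.2 (by positivity)) hσ) d
  set A : Measure (Fin d → ℝ) → Measure (Fin d → ℝ) → ℂ := fun μ ν =>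
    ∫ w, charFn d μ w * (starRingEnd ℂ) (charFn d ν w) * ((gw d σ w : ℝ) : ℂ) with hA
  have hdi : ∀ (μ ν : Measure (Fin d → ℝ)) [IsProbabilityMeasure μ] [IsProbabilityMeasure ν],
      (∫ x, ∫ y, gaussKer d σ x y ∂ν ∂μ) = c⁻¹ * (A μ ν).re := by
    intro μ ν _ _
    have h := doubleInt d hσ μ ν
    have h2 : c * (∫ x, ∫ y, gaussKer d σ x y ∂ν ∂μ) = (A μ ν).re := by
      simp only [hA]
      rw [← h, ← Complex.ofReal_mul, Complex.ofReal_re]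
    field_simp
    linarith [h2]
  -- measurability and boundedness
  have smP := sm_charFn d P
  have smQ := sm_charFn d Q
  have hTint : ∀ (μ ν : Measure (Fin d → ℝ)), StronglyMeasurable (charFn d μ) →
      StronglyMeasurable (charFn d ν) → (∀ w, ‖charFn d μ w‖ ≤ 1) → (∀ w, ‖charFn d ν w‖ ≤ 1) →
      Integrable (fun w => charFn d μ w * (starRingEnd ℂ) (charFn d ν w) * ((gw d σ w : ℝ) : ℂ)) := by
    intro μ ν hm hn hbm hbn
    apply int_mul_gw d hσ (C := 1)
    · exact (hm.aestronglyMeasurable.mul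
        (Complex.continuous_conj.comp_stronglyMeasurable hn).aestronglyMeasurable)
    · intro w
      rw [norm_mul, RCLike.norm_conj]
      calc ‖charFn d μ w‖ * ‖charFn d ν w‖ ≤ 1 * 1 :=
        mul_le_mul (hbm w) (hbn w) (norm_nonneg _) zero_le_one
      _ = 1 := mul_one 1
  have hbP := norm_charFn_le d P
  have hbQ := norm_charFn_le d Q
  have hsymm : (A Q P).re = (A P Q).re := by
    have hconj : A Q P = (starRingEnd ℂ) (A P Q) := by
      simp only [hA]
      rw [← integral_conj]
      congr 1
      funext w
      rw [map_mul, map_mul, Complex.conj_conj, Complex.conj_ofReal]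
      ring
    rw [hconj, Complex.conj_re]
  -- key integral identity
  have key : ∫ w : Fin d → ℝ, ‖charFn d P w - charFn d Q w‖ ^ 2 *
        Real.exp (-σ ^ 2 * (∑ i, w i ^ 2) / 2)
      = (A P P).re + (A Q Q).re - 2 * (A P Q).re := by
    have hpt : ∀ w : Fin d → ℝ, ‖charFn d P w - charFn d Q w‖ ^ 2 *
          Real.exp (-σ ^ 2 * (∑ i, w i ^ 2) / 2)
        = ((charFn d P w - charFn d Q w) * (starRingEnd ℂ) (charFn d P w - charFn d Q w)
            * ((gw d σ w : ℝ) : ℂ)).re := by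
      intro w
      rw [Complex.mul_conj, ← Complex.ofReal_mul, Complex.ofReal_re, Complex.sq_norm]
      rfl
    simp_rw [hpt]
    have hXsm : AEStronglyMeasurable (fun w => (charFn d P w - charFn d Q w) *
        (starRingEnd ℂ) (charFn d P w - charFn d Q w)) volume := by
      exact ((smP.sub smQ).aestronglyMeasurable.mul
        (Complex.continuous_conj.comp_stronglyMeasurable (smP.sub smQ)).aestronglyMeasurable)
    have hXint : Integrable (fun w => (charFn d P w - charFn d Q w) *
        (starRingEnd ℂ) (charFn d P w - charFn d Q w) * ((gw d σ w : ℝ) : ℂ)) := by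
      apply int_mul_gw d hσ hXsm (C := 4)
      intro w
      rw [norm_mul, RCLike.norm_conj]
      have h1 : ‖charFn d P w - charFn d Q w‖ ≤ 2 := by
        calc ‖charFn d P w - charFn d Q w‖ ≤ ‖charFn d P w‖ + ‖charFn d Q w‖ := norm_sub_le _ _
          _ ≤ 1 + 1 := add_le_add (hbP w) (hbQ w)
          _ = 2 := by norm_num
      calc ‖charFn d P w - charFn d Q w‖ * ‖charFn d P w - charFn d Q w‖ ≤ 2 * 2 :=
        mul_le_mul h1 h1 (norm_nonneg _) (by norm_num)
      _ = 4 := by norm_num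
    have integral_cre : ∀ {f : (Fin d → ℝ) → ℂ}, Integrable f volume →
        ∫ w, (f w).re = (∫ w, f w).re := fun hf => integral_re hf
    rw [integral_cre hXint]
    have expand : ∀ w : Fin d → ℝ, (charFn d P w - charFn d Q w) *
        (starRingEnd ℂ) (charFn d P w - charFn d Q w) * ((gw d σ w : ℝ) : ℂ)
        = (charFn d P w * (starRingEnd ℂ) (charFn d P w) * ((gw d σ w : ℝ) : ℂ)
            - charFn d P w * (starRingEnd ℂ) (charFn d Q w) * ((gw d σ w : ℝ) : ℂ))
          - (charFn d Q w * (starRingEnd ℂ) (charFn d P w) * ((gw d σ w : ℝ) : ℂ)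
            - charFn d Q w * (starRingEnd ℂ) (charFn d Q w) * ((gw d σ w : ℝ) : ℂ)) := by
      intro w
      rw [map_sub]
      ring
    have hPP := hTint P P smP smP hbP hbP
    have hQQ := hTint Q Q smQ smQ hbQ hbQ
    have hPQ := hTint P Q smP smQ hbP hbQ
    have hQP := hTint Q P smQ smP hbQ hbP
    simp_rw [expand]
    have h1 : Integrable (fun w => charFn d P w * (starRingEnd ℂ) (charFn d P w) * ((gw d σ w : ℝ) : ℂ)
        - charFn d P w * (starRingEnd ℂ) (charFn d Q w) * ((gw d σ w : ℝ) : ℂ)) volume := hPP.sub hPQ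
    have h2 : Integrable (fun w => charFn d Q w * (starRingEnd ℂ) (charFn d P w) * ((gw d σ w : ℝ) : ℂ)
        - charFn d Q w * (starRingEnd ℂ) (charFn d Q w) * ((gw d σ w : ℝ) : ℂ)) volume := hQP.sub hQQ
    rw [integral_sub h1 h2, integral_sub hPP hPQ, integral_sub hQP hQQ]
    simp only [hA] at hsymm ⊢
    simp only [Complex.sub_re]
    linarith [hsymm]
  -- assemble
  unfold gammaSq
  rw [hdi P P, hdi Q Q, hdi Q P, key]
  have hcoef : (σ / Real.sqrt (2 * Real.pi)) ^ d = c⁻¹ := by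
    rw [hc, ← inv_pow, inv_div]
  rw [hcoef, hsymm]
  ring
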